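/- If s ≥ 3 is odd, a_k = 1/k! for 0 ≤ k ≤ s-1, and a_s = 1/s! - 1/(s+1)!, then b_k = 0 for 1 ≤ k ≤ (s+1)/2, where b_k = ∑_{i=max(0,2k-s)}^{min(2k,s)} (-1)^{k+i} a_i a_{2k-i}. In particular the energy accuracy order is at least s + 2. -/

import Mathlib

open Finset

lemma key_alt (n : ℕ) (hn : n ≠ 0) :
    ∑ i ∈ Finset.range (n + 1),
      (-1 : ℝ) ^ i / ((Nat.factorial i : ℝ) * (Nat.factorial (n - i) : ℝ)) = 0 := by
  have h : ∀ i ∈ Finset.range (n + 1),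
      (-1 : ℝ) ^ i / ((Nat.factorial i : ℝ) * (Nat.factorial (n - i) : ℝ))
      = ((-1 : ℝ) ^ i * (n.choose i : ℝ)) / (Nat.factorial n : ℝ) := by
    intro i hi
    have hin : i ≤ n := Nat.lt_succ_iff.mp (Finset.mem_range.mp hi)
    have hc := Nat.choose_mul_factorial_mul_factorial hin
    have hfi : (Nat.factorial i : ℝ) ≠ 0 := Nat.cast_ne_zero.mpr (Nat.factorial_ne_zero i)
    have hfni : (Nat.factorial (n - i) : ℝ) ≠ 0 := Nat.cast_ne_zero.mpr (Nat.factorial_ne_zero _)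
    have hfn : (Nat.factorial n : ℝ) ≠ 0 := Nat.cast_ne_zero.mpr (Nat.factorial_ne_zero n)
    have hcr : ((n.choose i : ℝ)) * (Nat.factorial i : ℝ) * (Nat.factorial (n - i) : ℝ)
        = (Nat.factorial n : ℝ) := by exact_mod_cast congrArg (Nat.cast : ℕ → ℝ) hc
    field_simp
    rw [← hcr]; ring
  rw [Finset.sum_congr rfl h, ← Finset.sum_div, div_eq_zero_iff]
  left
  have := Int.alternating_sum_range_choose_of_ne hn
  exact_mod_cast congrArg (Int.cast : ℤ → ℝ) this

theorem bk_vanish_odd_stage (s : ℕ) (hs : 3 ≤ s) (hso : Odd s)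
    (a : ℕ → ℝ)
    (ha : ∀ k ≤ s - 1, a k = 1 / (Nat.factorial k : ℝ))
    (has : a s = 1 / (Nat.factorial s : ℝ) - 1 / (Nat.factorial (s + 1) : ℝ))
    (k : ℕ) (hk1 : 1 ≤ k) (hk2 : k ≤ (s + 1) / 2) :
    ∑ i ∈ Finset.Icc (max 0 (2 * k - s)) (min (2 * k) s),
        (-1 : ℝ) ^ (k + i) * a i * a (2 * k - i) = 0 := by
  obtain ⟨m, hm⟩ := hso
  have hcase : 2 * k ≤ s - 1 ∨ 2 * k = s + 1 := by omega
  rcases hcase with hA | hB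
  · -- easy case: all indices ≤ s - 1
    have hmax : max 0 (2 * k - s) = 0 := by omega
    have hmin : min (2 * k) s = 2 * k := by omega
    rw [hmax, hmin]
    have hIcc : Finset.Icc 0 (2 * k) = Finset.range (2 * k + 1) := by
      ext x; simp [Nat.lt_succ_iff]
    rw [hIcc]
    have hcong : ∀ i ∈ Finset.range (2 * k + 1),
        (-1 : ℝ) ^ (k + i) * a i * a (2 * k - i)
        = (-1 : ℝ) ^ k * ((-1 : ℝ) ^ i / ((Nat.factorial i : ℝ) * (Nat.factorial (2 * k - i) : ℝ))) := by
      intro i hi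
      have hi' : i ≤ 2 * k := Nat.lt_succ_iff.mp (Finset.mem_range.mp hi)
      rw [ha i (by omega), ha (2 * k - i) (by omega), pow_add]
      ring
    rw [Finset.sum_congr rfl hcong, ← Finset.mul_sum, key_alt (2 * k) (by omega), mul_zero]
  · -- boundary case: 2k = s + 1
    have hmax : max 0 (2 * k - s) = 1 := by omega
    have hmin : min (2 * k) s = s := by omega
    rw [hmax, hmin]
    set g : ℕ → ℝ := fun i => (-1 : ℝ) ^ (k + i) / ((Nat.factorial i : ℝ) * (Nat.factorial (s + 1 - i) : ℝ)) with hg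
    -- full sum of g over range (s+2) is zero
    have hfull : ∑ i ∈ Finset.range (s + 2), g i = 0 := by
      have hcong : ∀ i ∈ Finset.range (s + 2),
          g i = (-1 : ℝ) ^ k * ((-1 : ℝ) ^ i / ((Nat.factorial i : ℝ) * (Nat.factorial (s + 1 - i) : ℝ))) := by
        intro i _
        simp only [hg, pow_add]
        ring
      rw [Finset.sum_congr rfl hcong, ← Finset.mul_sum, key_alt (s + 1) (by omega), mul_zero]
    -- split the full sum
    have hsplit : ∑ i ∈ Finset.range (s + 2), g i
        = g 0 + (∑ i ∈ Finset.Icc 1 s, g i) + g (s + 1) := by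
      have h1 : Finset.range (s + 2) = insert 0 (insert (s + 1) (Finset.Icc 1 s)) := by
        ext x; simp [Nat.lt_succ_iff]; omega
      rw [h1, Finset.sum_insert (by simp), Finset.sum_insert (by simp)]
      ring
    have hIccg : ∑ i ∈ Finset.Icc 1 s, g i = -(g 0) - g (s + 1) := by
      rw [hfull] at hsplit; linarith
    -- relate goal sum to g
    set f : ℕ → ℝ := fun i => (-1 : ℝ) ^ (k + i) * a i * a (2 * k - i) with hf
    have hfg : ∀ i ∈ Finset.Icc 1 s, i ≠ 1 → i ≠ s → f i - g i = 0 := by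
      intro i hi h1 hsne
      simp only [Finset.mem_Icc] at hi
      have h2ki : 2 * k - i = s + 1 - i := by omega
      simp only [hf, hg, h2ki]
      rw [ha i (by omega), ha (s + 1 - i) (by omega)]
      have hfi : (Nat.factorial i : ℝ) ≠ 0 := Nat.cast_ne_zero.mpr (Nat.factorial_ne_zero i)
      have hfni : (Nat.factorial (s + 1 - i) : ℝ) ≠ 0 := Nat.cast_ne_zero.mpr (Nat.factorial_ne_zero _)
      field_simp
      ring
    have hdiff : ∑ i ∈ Finset.Icc 1 s, (f i - g i) = (f 1 - g 1) + (f s - g s) := by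
      rw [← Finset.sum_subset (s₁ := ({1, s} : Finset ℕ))
        (by intro x hx; simp at hx; simp [Finset.mem_Icc]; omega)
        (by intro x hx hx'; simp at hx'; exact hfg x hx hx'.1 hx'.2)]
      rw [Finset.sum_pair (by omega)]
    have hgoal : ∑ i ∈ Finset.Icc 1 s, f i
        = (-(g 0) - g (s + 1)) + (f 1 - g 1) + (f s - g s) := by
      have := Finset.sum_sub_distrib (s := Finset.Icc 1 s) (f := f) (g := g)
      rw [hdiff] at this
      rw [hIccg] at *
      linarith
    -- now explicit computation
    have hsub1 : 2 * k - 1 = s := by omega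
    have hsubs : 2 * k - s = 1 := by omega
    have ha1 : a 1 = 1 := by rw [ha 1 (by omega)]; simp [Nat.factorial]
    have hpow : (-1 : ℝ) ^ (k + s) = -(-1 : ℝ) ^ k := by
      rw [pow_add, Odd.neg_one_pow ⟨m, hm⟩]; ring
    have hpows1 : (-1 : ℝ) ^ (k + (s + 1)) = (-1 : ℝ) ^ k := by
      rw [show k + (s + 1) = (k + s) + 1 by ring, pow_succ, hpow]; ring
    have hfs : (Nat.factorial s : ℝ) ≠ 0 := Nat.cast_ne_zero.mpr (Nat.factorial_ne_zero s)
    have hfs1 : (Nat.factorial (s + 1) : ℝ) ≠ 0 := Nat.cast_ne_zero.mpr (Nat.factorial_ne_zero _)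
    have hg0 : g 0 = (-1 : ℝ) ^ k / (Nat.factorial (s + 1) : ℝ) := by
      simp [hg, Nat.factorial]
    have hgs1 : g (s + 1) = (-1 : ℝ) ^ k / (Nat.factorial (s + 1) : ℝ) := by
      simp [hg, hpows1, Nat.factorial]
    have hg1 : g 1 = (-1 : ℝ) ^ (k + 1) / (Nat.factorial s : ℝ) := by
      simp [hg, Nat.factorial]
    have hgs : g s = (-1 : ℝ) ^ (k + s) / (Nat.factorial s : ℝ) := by
      simp [hg, Nat.factorial]
    have hf1 : f 1 = (-1 : ℝ) ^ (k + 1) * (1 / (Nat.factorial s : ℝ) - 1 / (Nat.factorial (s + 1) : ℝ)) := by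
      simp only [hf, ha1, hsub1, has]; ring
    have hfs' : f s = (-1 : ℝ) ^ (k + s) * (1 / (Nat.factorial s : ℝ) - 1 / (Nat.factorial (s + 1) : ℝ)) := by
      simp only [hf, hsubs, ha1, has]; ring
    rw [show (∑ i ∈ Finset.Icc 1 s, (-1 : ℝ) ^ (k + i) * a i * a (2 * k - i)) = ∑ i ∈ Finset.Icc 1 s, f i from rfl]
    rw [hgoal, hg0, hgs1, hg1, hgs, hf1, hfs', hpow, pow_succ]
    field_simp
    ring
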